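/- With A and (a^{ij}) = A^{-1} as above and β_j = 2πj/(N+1), for every s ∈ {1,...,N}: ∑_{j=1}^{N} a^{sj} e^{iβ_j} = (e^{iβ_s} - 1)/(2N), and ∑_{j=1}^{N} a^{sj} e^{-iβ_j} = (e^{-iβ_s} - 1)/(2N). -/

import Mathlib

open Real Complex Finset Matrix

noncomputable def dd (N j : ℕ) : ℝ := 1 / (Real.sin (j * π / (N + 1)))^2

noncomputable def ee (x : ℝ) : ℂ := Complex.exp (x * Complex.I)

noncomputable def β (N j : ℕ) : ℝ := 2 * π * j / (N + 1)

noncomputable def matA (N : ℕ) : Matrix (Fin N) (Fin N) ℝ :=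
  fun i j => if i = j then ((N : ℝ)^2 + 2 * N) / 3
             else - dd N (((i : ℕ) : ℤ) - ((j : ℕ) : ℤ)).natAbs


noncomputable def qc (N : ℕ) : ℂ := Complex.exp (2 * Real.pi * Complex.I / (N + 1))

lemma qc_prim (N : ℕ) : IsPrimitiveRoot (qc N) (N + 1) := by
  have := Complex.isPrimitiveRoot_exp (N+1) (Nat.succ_ne_zero N)
  simpa [qc] using this

lemma qc_pow (N : ℕ) : (qc N)^(N+1) = 1 := (qc_prim N).pow_eq_one

lemma qc_pow_ne_one (N : ℕ) {m : ℕ} (hm : ¬ (N+1) ∣ m) : (qc N)^m ≠ 1 := by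
  intro h
  exact hm ((qc_prim N).pow_eq_one_iff_dvd m |>.1 h)

lemma qc_ne_zero (N : ℕ) : qc N ≠ 0 := Complex.exp_ne_zero _

lemma qc_pow_mod (N : ℕ) (a : ℕ) : (qc N)^(a % (N+1)) = (qc N)^a := by
  conv_rhs => rw [← Nat.div_add_mod a (N+1)]
  rw [pow_add, pow_mul, qc_pow, one_pow, one_mul]

lemma geom_zero (N : ℕ) {m : ℕ} (hm : ¬ (N+1) ∣ m) :
    ∑ i ∈ range (N+1), ((qc N)^m)^i = 0 := by
  rw [geom_sum_eq (qc_pow_ne_one N hm)]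
  rw [← pow_mul, mul_comm, pow_mul, qc_pow, one_pow]
  simp

lemma abel_id (x : ℂ) (n : ℕ) :
    (x - 1) * ∑ i ∈ range n, (i:ℂ) * x^i
      = ((n:ℂ)-1) * x^n + 1 - ∑ i ∈ range n, x^i := by
  induction n with
  | zero => simp
  | succ n ih =>
    rw [Finset.sum_range_succ, Finset.sum_range_succ (f := fun i => x^i), mul_add, ih]
    push_cast
    ring

lemma range_split (N : ℕ) : range (N+1) = insert 0 (Icc 1 N) := by
  ext k; simp [Finset.mem_range, Finset.mem_Icc]; omega

lemma not_dvd_of_Icc (N : ℕ) {t : ℕ} (ht : t ∈ Icc 1 N) : ¬ (N+1) ∣ t := by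
  rw [Finset.mem_Icc] at ht
  intro h
  have := Nat.le_of_dvd (by omega) h
  omega

lemma qc_sub_one_ne (N : ℕ) {m : ℕ} (hm : ¬ (N+1) ∣ m) : (qc N)^m - 1 ≠ 0 :=
  sub_ne_zero.2 (qc_pow_ne_one N hm)

lemma inv_eq (N : ℕ) {m : ℕ} (hm : ¬ (N+1) ∣ m) :
    1/((qc N)^m - 1) = (∑ i ∈ range (N+1), (i:ℂ) * ((qc N)^m)^i) / (N+1) := by
  have h1 := abel_id ((qc N)^m) (N+1)
  rw [← pow_mul, mul_comm m (N+1), pow_mul, qc_pow, one_pow, geom_zero N hm] at h1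
  have h2 : ((qc N)^m - 1) * ∑ i ∈ range (N+1), (i:ℂ) * ((qc N)^m)^i = (N+1) := by
    rw [h1]; push_cast; ring
  have h3 := qc_sub_one_ne N hm
  have h4 : ((N:ℂ)+1) ≠ 0 := by
    exact Nat.cast_add_one_ne_zero N
  field_simp
  linear_combination -h2

lemma gauss1 (n : ℕ) : ∑ i ∈ range n, (i:ℂ) = n*(n-1)/2 := by
  induction n with
  | zero => simp
  | succ n ih => rw [Finset.sum_range_succ, ih]; push_cast; ring

lemma gauss2 (n : ℕ) : ∑ i ∈ range n, (i:ℂ)^2 = n*(n-1)*(2*n-1)/6 := by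
  induction n with
  | zero => simp
  | succ n ih => rw [Finset.sum_range_succ, ih]; push_cast; ring

lemma geomIcc (N : ℕ) (m : ℕ) :
    ∑ t ∈ Icc 1 N, ((qc N)^m)^t = (if (N+1) ∣ m then ((N:ℂ)+1) else 0) - 1 := by
  have h : ∑ t ∈ range (N+1), ((qc N)^m)^t
      = 1 + ∑ t ∈ Icc 1 N, ((qc N)^m)^t := by
    rw [range_split, Finset.sum_insert (by simp)]
    simp
  by_cases hd : (N+1) ∣ m
  · have : (qc N)^m = 1 := by
      rcases hd with ⟨c, rfl⟩
      rw [pow_mul, qc_pow, one_pow]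
    rw [this, if_pos hd]
    simp [Nat.card_Icc]
  · rw [geom_zero N hd] at h
    rw [if_neg hd]
    linear_combination -h

lemma S1 (N : ℕ) : ∑ t ∈ Icc 1 N, 1/((qc N)^t - 1) = -(N:ℂ)/2 := by
  have h4 : ((N:ℂ)+1) ≠ 0 := Nat.cast_add_one_ne_zero N
  rw [Finset.sum_congr rfl (fun t ht => inv_eq N (not_dvd_of_Icc N ht)), ← Finset.sum_div]
  have swap : ∑ t ∈ Icc 1 N, ∑ i ∈ range (N+1), (i:ℂ) * ((qc N)^t)^i
      = ∑ i ∈ range (N+1), (i:ℂ) * ((if (N+1) ∣ i then ((N:ℂ)+1) else 0) - 1) := by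
    rw [Finset.sum_comm]
    refine Finset.sum_congr rfl fun i _ => ?_
    rw [← Finset.mul_sum]
    congr 1
    calc ∑ t ∈ Icc 1 N, ((qc N)^t)^i = ∑ t ∈ Icc 1 N, ((qc N)^i)^t :=
          Finset.sum_congr rfl fun t _ => by rw [← pow_mul, mul_comm, pow_mul]
      _ = _ := geomIcc N i
  rw [swap]
  have h0 : ∀ i ∈ range (N+1), (i:ℂ) * ((if (N+1) ∣ i then ((N:ℂ)+1) else 0) - 1) = -(i:ℂ) := by
    intro i hi
    rw [Finset.mem_range] at hi
    by_cases h : i = 0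
    · subst h; simp
    · rw [if_neg (fun hd => h (by have := Nat.le_of_dvd (Nat.pos_of_ne_zero h) hd; omega))]
      ring
  rw [Finset.sum_congr rfl h0, Finset.sum_neg_distrib, gauss1]
  push_cast
  field_simp
  ring

lemma S2 (N : ℕ) : ∑ t ∈ Icc 1 N, (1/((qc N)^t - 1))^2 = (N:ℂ)*(4-N)/12 := by
  have h4 : ((N:ℂ)+1) ≠ 0 := Nat.cast_add_one_ne_zero N
  have hterm : ∀ t ∈ Icc 1 N, (1/((qc N)^t - 1))^2
      = (∑ i ∈ range (N+1), ∑ j ∈ range (N+1), (i:ℂ)*(j:ℂ)*((qc N)^t)^(i+j)) / ((N:ℂ)+1)^2 := by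
    intro t ht
    rw [inv_eq N (not_dvd_of_Icc N ht), div_pow]
    congr 1
    rw [sq, Finset.sum_mul_sum]
    refine Finset.sum_congr rfl fun i _ => Finset.sum_congr rfl fun j _ => ?_
    rw [pow_add]; ring
  rw [Finset.sum_congr rfl hterm, ← Finset.sum_div]
  have swap : ∑ t ∈ Icc 1 N, ∑ i ∈ range (N+1), ∑ j ∈ range (N+1), (i:ℂ)*(j:ℂ)*((qc N)^t)^(i+j)
      = ∑ i ∈ range (N+1), ∑ j ∈ range (N+1),
          (i:ℂ)*(j:ℂ)*((if (N+1) ∣ (i+j) then ((N:ℂ)+1) else 0) - 1) := by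
    rw [Finset.sum_comm]
    refine Finset.sum_congr rfl fun i _ => ?_
    rw [Finset.sum_comm]
    refine Finset.sum_congr rfl fun j _ => ?_
    rw [← Finset.mul_sum]
    congr 1
    calc ∑ t ∈ Icc 1 N, ((qc N)^t)^(i+j) = ∑ t ∈ Icc 1 N, ((qc N)^(i+j))^t :=
          Finset.sum_congr rfl fun t _ => by rw [← pow_mul, mul_comm, pow_mul]
      _ = _ := geomIcc N (i+j)
  rw [swap]
  have hA : ∀ i ∈ range (N+1), ∑ j ∈ range (N+1), (i:ℂ)*(j:ℂ)*(if (N+1) ∣ (i+j) then ((N:ℂ)+1) else 0)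
      = (i:ℂ)*(((N:ℂ)+1)-i)*((N:ℂ)+1) := by
    intro i hi
    rw [Finset.mem_range] at hi
    by_cases h0 : i = 0
    · subst h0; simp
    · rw [Finset.sum_eq_single (N+1-i)]
      · rw [if_pos ⟨1, by omega⟩]
        push_cast [Nat.cast_sub (le_of_lt hi)]
        ring
      · intro j hj hne
        rw [Finset.mem_range] at hj
        rw [if_neg, mul_zero]
        rintro ⟨c, hc⟩
        have hcb : c ≤ 1 := by
          by_contra hcb
          have : (N+1)*2 ≤ (N+1)*c := Nat.mul_le_mul_left _ (by omega)
          omega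
        interval_cases c <;> omega
      · intro h
        exact absurd (Finset.mem_range.2 (by omega)) h
  have split : ∑ i ∈ range (N+1), ∑ j ∈ range (N+1),
          (i:ℂ)*(j:ℂ)*((if (N+1) ∣ (i+j) then ((N:ℂ)+1) else 0) - 1)
      = (∑ i ∈ range (N+1), (i:ℂ)*(((N:ℂ)+1)-i)*((N:ℂ)+1)) - (∑ i ∈ range (N+1), (i:ℂ))^2 := by
    rw [sq, Finset.sum_mul_sum, ← Finset.sum_sub_distrib]
    refine Finset.sum_congr rfl fun i hi => ?_
    calc ∑ j ∈ range (N+1), (i:ℂ)*(j:ℂ)*((if (N+1) ∣ (i+j) then ((N:ℂ)+1) else 0) - 1)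
        = (∑ j ∈ range (N+1), (i:ℂ)*(j:ℂ)*(if (N+1) ∣ (i+j) then ((N:ℂ)+1) else 0))
            - ∑ j ∈ range (N+1), (i:ℂ)*(j:ℂ) := by
          rw [← Finset.sum_sub_distrib]
          exact Finset.sum_congr rfl fun j _ => by ring
      _ = _ := by rw [hA i hi]
  rw [split]
  have hlin : ∑ i ∈ range (N+1), (i:ℂ)*(((N:ℂ)+1)-i)*((N:ℂ)+1)
      = ((N:ℂ)+1)*(((N:ℂ)+1)*(∑ i ∈ range (N+1), (i:ℂ)) - ∑ i ∈ range (N+1), (i:ℂ)^2) := by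
    calc ∑ i ∈ range (N+1), (i:ℂ)*(((N:ℂ)+1)-i)*((N:ℂ)+1)
        = ∑ i ∈ range (N+1), (((N:ℂ)+1)*(((N:ℂ)+1)*(i:ℂ)) - ((N:ℂ)+1)*(i:ℂ)^2) :=
          Finset.sum_congr rfl fun i _ => by ring
      _ = _ := by
          rw [Finset.sum_sub_distrib, ← Finset.mul_sum, ← Finset.mul_sum, ← Finset.mul_sum]
          ring
  rw [hlin, gauss1, gauss2]
  push_cast
  field_simp
  ring

lemma not_dvd_of_bounds (N : ℕ) {t : ℕ} (h1 : 1 ≤ t) (h2 : t ≤ N) : ¬ (N+1) ∣ t :=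
  not_dvd_of_Icc N (Finset.mem_Icc.2 ⟨h1, h2⟩)

lemma sin_pos_aux (N : ℕ) {t : ℕ} (h1 : 1 ≤ t) (h2 : t ≤ N) :
    0 < Real.sin (t * π / (N+1)) := by
  apply Real.sin_pos_of_pos_of_lt_pi
  · have ht : (0:ℝ) < t := by exact_mod_cast h1
    have : (0:ℝ) < (N:ℝ)+1 := by positivity
    positivity
  · rw [div_lt_iff₀ (by positivity)]
    have ht : (t:ℝ) < (N:ℝ)+1 := by exact_mod_cast Nat.lt_succ_of_le h2
    nlinarith [Real.pi_pos]

lemma dd_pos (N : ℕ) {t : ℕ} (h1 : 1 ≤ t) (h2 : t ≤ N) : 0 < dd N t := by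
  have := sin_pos_aux N h1 h2
  rw [dd]
  positivity

lemma dd_symm (N : ℕ) {t : ℕ} (h1 : 1 ≤ t) (h2 : t ≤ N) : dd N (N+1-t) = dd N t := by
  rw [dd, dd]
  have hc : ((N+1-t : ℕ):ℝ) = (N:ℝ)+1 - t := by
    push_cast [Nat.cast_sub (by omega : t ≤ N+1)]
    ring
  rw [hc]
  have h5 : ((N:ℝ)+1 - t)*π/((N:ℝ)+1) = π - t*π/((N:ℝ)+1) := by
    field_simp
  rw [h5, Real.sin_pi_sub]

lemma dd_eq (N : ℕ) {t : ℕ} (h1 : 1 ≤ t) (h2 : t ≤ N) :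
    ((dd N t : ℝ) : ℂ) = -4 * (qc N)^t / ((qc N)^t - 1)^2 := by
  set a : ℝ := t * π / (N+1) with ha
  set u : ℂ := Complex.exp (a * Complex.I) with hu
  have hu0 : u ≠ 0 := Complex.exp_ne_zero _
  have hq1 : (qc N)^t - 1 ≠ 0 := qc_sub_one_ne N (not_dvd_of_bounds N h1 h2)
  have hsa : Real.sin a ≠ 0 := ne_of_gt (sin_pos_aux N h1 h2)
  have hu2 : u^2 = (qc N)^t := by
    have h4 : ((N:ℂ)+1) ≠ 0 := Nat.cast_add_one_ne_zero N
    rw [hu, qc, ← Complex.exp_nat_mul, ← Complex.exp_nat_mul]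
    congr 1
    rw [ha]
    push_cast
    field_simp
  have hsin : ((Real.sin a : ℝ) : ℂ) = (u⁻¹ - u) * Complex.I / 2 := by
    rw [Complex.ofReal_sin, Complex.sin, hu, ← Complex.exp_neg]
    congr 2
    ring
  have key : ((Real.sin a : ℝ) : ℂ)^2 * ((qc N)^t) = -((qc N)^t - 1)^2/4 := by
    rw [hsin, ← hu2]
    have hI : (Complex.I)^2 = -1 := Complex.I_sq
    calc ((u⁻¹ - u)*Complex.I/2)^2 * u^2 = ((u⁻¹-u)^2 * Complex.I^2 / 4) * u^2 := by ring
      _ = -((u⁻¹-u)^2/4) * u^2 := by rw [hI]; ring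
      _ = -(u^2-1)^2/4 := by field_simp; ring
  have hq0 : (qc N)^t ≠ 0 := pow_ne_zero _ (Complex.exp_ne_zero _)
  have hs0 : ((Real.sin a : ℝ) : ℂ) ≠ 0 := by exact_mod_cast hsa
  rw [dd]
  rw [Complex.ofReal_div, Complex.ofReal_one, Complex.ofReal_pow, ← ha]
  rw [div_eq_div_iff (pow_ne_zero 2 hs0) (pow_ne_zero 2 hq1)]
  linear_combination (4 : ℂ) * key

lemma ddC_sum (N : ℕ) : ∑ t ∈ Icc 1 N, -4*(qc N)^t/((qc N)^t-1)^2 = ((N:ℂ)^2+2*N)/3 := by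
  have hterm : ∀ t ∈ Icc 1 N, -4*(qc N)^t/((qc N)^t-1)^2
      = -4*((1/((qc N)^t-1))^2 + 1/((qc N)^t-1)) := by
    intro t ht
    have h := qc_sub_one_ne N (not_dvd_of_Icc N ht)
    field_simp
    ring
  rw [Finset.sum_congr rfl hterm, ← Finset.mul_sum, Finset.sum_add_distrib, S2, S1]
  ring

lemma ddC_sumq (N : ℕ) : ∑ t ∈ Icc 1 N, 4*((qc N)^t)^2/((qc N)^t-1)^2 = (N:ℂ)*(4-N)/3 := by
  have hterm : ∀ t ∈ Icc 1 N, 4*((qc N)^t)^2/((qc N)^t-1)^2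
      = 4*(1/((qc N)^t-1))^2 + 8*(1/((qc N)^t-1)) + 4 := by
    intro t ht
    have h := qc_sub_one_ne N (not_dvd_of_Icc N ht)
    field_simp
    ring
  rw [Finset.sum_congr rfl hterm, Finset.sum_add_distrib, Finset.sum_add_distrib,
    ← Finset.mul_sum, ← Finset.mul_sum, S2, S1]
  simp [Finset.sum_const, Nat.card_Icc, nsmul_eq_mul]
  push_cast
  ring

lemma dd_sum (N : ℕ) : ∑ t ∈ Icc 1 N, dd N t = ((N:ℝ)^2+2*N)/3 := by
  have h : ((∑ t ∈ Icc 1 N, dd N t : ℝ) : ℂ) = ((((N:ℝ)^2+2*N)/3 : ℝ) : ℂ) := by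
    rw [Complex.ofReal_sum]
    rw [Finset.sum_congr rfl (fun t ht => dd_eq N (Finset.mem_Icc.1 ht).1 (Finset.mem_Icc.1 ht).2)]
    rw [ddC_sum]
    push_cast
    ring
  exact_mod_cast h

lemma fin_sum_split {M : Type*} [AddCommMonoid M] (N : ℕ) (c : M) (f : ℕ → M) :
    ∑ t : Fin (N+1), (if t = 0 then c else f t.val) = c + ∑ t ∈ Icc 1 N, f t := by
  have h1 : ∀ t : Fin (N+1), (if t = 0 then c else f t.val)
      = (if (t:ℕ) = 0 then c else f t.val) := by
    intro t
    by_cases h : t = 0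
    · subst h; simp
    · rw [if_neg h, if_neg (fun hh => h (Fin.ext (by simp [hh])))]
  refine (Finset.sum_congr rfl fun t _ => h1 t).trans ?_
  refine (Fin.sum_univ_eq_sum_range (fun m => if m = 0 then c else f m) (N+1)).trans ?_
  rw [range_split, Finset.sum_insert (by simp), if_pos rfl]
  congr 1
  refine Finset.sum_congr rfl fun m hm => ?_
  rw [Finset.mem_Icc] at hm
  rw [if_neg (by omega)]

noncomputable def cC (N : ℕ) : Fin (N+1) → ℂ :=
  fun t => if t = 0 then ((N:ℂ)^2 + 2*N)/3 else 4*(qc N)^(t.val)/((qc N)^(t.val)-1)^2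

lemma cC_sum (N : ℕ) : ∑ t : Fin (N+1), cC N t = 0 := by
  simp only [cC]
  refine (fin_sum_split N (((N:ℂ)^2+2*N)/3) (fun m => 4*(qc N)^m/((qc N)^m-1)^2)).trans ?_
  have h2 : ∑ t ∈ Icc 1 N, 4*(qc N)^t/((qc N)^t-1)^2 = -(((N:ℂ)^2+2*N)/3) := by
    rw [← ddC_sum N, ← Finset.sum_neg_distrib]
    exact Finset.sum_congr rfl fun t _ => by ring
  rw [h2]
  ring

lemma cC_sumV (N : ℕ) : ∑ t : Fin (N+1), cC N t * (qc N)^(t.val) = 2*(N:ℂ) := by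
  have h1 : ∀ t : Fin (N+1), cC N t * (qc N)^(t.val)
      = if t = 0 then ((N:ℂ)^2+2*N)/3 else (fun m => 4*((qc N)^m)^2/((qc N)^m-1)^2) t.val := by
    intro t
    by_cases h : t = 0
    · subst h; simp [cC]
    · simp only [cC, if_neg h]
      ring
  refine (Finset.sum_congr rfl fun t _ => h1 t).trans ?_
  refine (fin_sum_split N (((N:ℂ)^2+2*N)/3)
    (fun m => 4*((qc N)^m)^2/((qc N)^m-1)^2)).trans ?_
  rw [ddC_sumq]
  ring

lemma f_sub_eq {α : Type*} (N : ℕ) (f : ℕ → α)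
    (hf : ∀ m, 1 ≤ m → m ≤ N → f (N+1-m) = f m)
    (s j : Fin N) (hne : ¬ s = j) :
    f ((j.succ - s.succ : Fin (N+1)).val) = f ((((s:ℕ)) : ℤ) - (((j:ℕ)) : ℤ)).natAbs := by
  have hs := s.isLt
  have hj := j.isLt
  have hv : (j.succ - s.succ : Fin (N+1)).val
      = (j.val + 1 + ((N+1) - (s.val + 1))) % (N+1) := by
    rw [Fin.sub_def]
    simp [Fin.val_succ]
    congr 1
    omega
  rcases lt_trichotomy s.val j.val with h | h | h
  · have hv2 : (j.succ - s.succ : Fin (N+1)).val = j.val - s.val := by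
      rw [hv]
      have e1 : (j:ℕ) + 1 + ((N+1) - ((s:ℕ)+1)) = (N+1) + ((j:ℕ) - (s:ℕ)) := by omega
      rw [e1, Nat.add_mod_left, Nat.mod_eq_of_lt (by omega)]
    have hn2 : ((((s:ℕ)) : ℤ) - (((j:ℕ)) : ℤ)).natAbs = j.val - s.val := by omega
    rw [hv2, hn2]
  · exact absurd (Fin.ext h) hne
  · have hv2 : (j.succ - s.succ : Fin (N+1)).val = (N+1) - (s.val - j.val) := by
      rw [hv]
      have e1 : (j:ℕ) + 1 + ((N+1) - ((s:ℕ)+1)) = (N+1) - ((s:ℕ) - (j:ℕ)) := by omega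
      rw [e1, Nat.mod_eq_of_lt (by omega)]
    have hn2 : ((((s:ℕ)) : ℤ) - (((j:ℕ)) : ℤ)).natAbs = s.val - j.val := by omega
    rw [hv2, hn2]
    exact hf _ (by omega) (by omega)

lemma sub_succ_ne_zero (N : ℕ) (s j : Fin N) (hne : ¬ s = j) :
    (j.succ - s.succ : Fin (N+1)) ≠ 0 := by
  intro h0
  exact hne (Fin.succ_inj.1 (sub_eq_zero.1 h0)).symm

lemma sub_succ_bounds (N : ℕ) (s j : Fin N) (hne : ¬ s = j) :
    1 ≤ (j.succ - s.succ : Fin (N+1)).val ∧ (j.succ - s.succ : Fin (N+1)).val ≤ N := by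
  constructor
  · refine Nat.pos_of_ne_zero fun hh => sub_succ_ne_zero N s j hne ?_
    exact Fin.ext hh
  · have := (j.succ - s.succ : Fin (N+1)).isLt
    omega

lemma matA_cC (N : ℕ) (s j : Fin N) :
    ((matA N s j : ℝ) : ℂ) = cC N (j.succ - s.succ) := by
  by_cases h : s = j
  · subst h
    rw [matA, cC]
    simp only [if_pos rfl, sub_self, if_pos rfl]
    push_cast
    ring
  · rw [matA, if_neg h, cC, if_neg (sub_succ_ne_zero N s j h)]
    obtain ⟨hw1, hw2⟩ := sub_succ_bounds N s j h
    have hd : dd N ((j.succ - s.succ : Fin (N+1)).val)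
        = dd N ((((s:ℕ)) : ℤ) - (((j:ℕ)) : ℤ)).natAbs :=
      f_sub_eq N (dd N) (fun m hm1 hm2 => dd_symm N hm1 hm2) s j h
    rw [Complex.ofReal_neg, ← hd, dd_eq N hw1 hw2]
    ring

lemma val_add_pow (N : ℕ) (t b : Fin (N+1)) :
    (qc N)^((t + b : Fin (N+1)).val) = (qc N)^(t.val) * (qc N)^(b.val) := by
  rw [Fin.val_add, qc_pow_mod, pow_add]

lemma rowsum (N : ℕ) (s : Fin N) :
    ∑ j : Fin N, ((matA N s j : ℝ) : ℂ) * ((qc N)^((j:ℕ)+1) - 1)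
      = 2*(N:ℂ)*(qc N)^((s:ℕ)+1) := by
  have h1 : ∀ j : Fin N, ((matA N s j : ℝ):ℂ) * ((qc N)^((j:ℕ)+1) - 1)
      = cC N (j.succ - s.succ) * ((qc N)^((j.succ : Fin (N+1)).val) - 1) := by
    intro j
    rw [matA_cC, Fin.val_succ]
  rw [Finset.sum_congr rfl fun j _ => h1 j]
  have h2 : ∑ u : Fin (N+1), cC N (u - s.succ) * ((qc N)^(u.val) - 1)
      = ∑ j : Fin N, cC N (j.succ - s.succ) * ((qc N)^((j.succ : Fin (N+1)).val) - 1) := by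
    rw [Fin.sum_univ_succ]
    simp
  rw [← h2]
  have h3 : ∑ u : Fin (N+1), cC N (u - s.succ) * ((qc N)^(u.val) - 1)
      = ∑ t : Fin (N+1), cC N t * ((qc N)^((t + s.succ : Fin (N+1)).val) - 1) := by
    apply Fintype.sum_equiv (Equiv.subRight (s.succ : Fin (N+1)))
    intro u
    simp [Equiv.subRight, sub_add_cancel]
  rw [h3]
  calc ∑ t : Fin (N+1), cC N t * ((qc N)^((t + s.succ : Fin (N+1)).val) - 1)
      = ∑ t : Fin (N+1), (cC N t * (qc N)^(t.val) * (qc N)^((s:ℕ)+1) - cC N t) := by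
        refine Finset.sum_congr rfl fun t _ => ?_
        rw [val_add_pow, Fin.val_succ]
        ring
    _ = (∑ t : Fin (N+1), cC N t * (qc N)^(t.val)) * (qc N)^((s:ℕ)+1)
          - ∑ t : Fin (N+1), cC N t := by
        rw [Finset.sum_sub_distrib, Finset.sum_mul]
    _ = 2*(N:ℂ)*(qc N)^((s:ℕ)+1) := by
        rw [cC_sumV, cC_sum]
        ring

lemma dom (N : ℕ) (hN : 1 ≤ N) (s : Fin N) :
    ∑ j ∈ Finset.univ.erase s, ‖matA N s j‖ < ‖matA N s s‖ := by
  classical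
  set cR : Fin (N+1) → ℝ := fun t => if t = 0 then 0 else dd N t.val with hcR
  have hNr : (1:ℝ) ≤ (N:ℝ) := by exact_mod_cast hN
  have hDpos : 0 < ((N:ℝ)^2+2*N)/3 := by nlinarith
  have hdiag : matA N s s = ((N:ℝ)^2+2*N)/3 := by rw [matA, if_pos rfl]
  have hterm : ∀ j : Fin N, ¬ j = s → ‖matA N s j‖ = cR (j.succ - s.succ) := by
    intro j hj
    have hne : ¬ s = j := fun h => hj h.symm
    obtain ⟨hw1, hw2⟩ := sub_succ_bounds N s j hne
    have hd : dd N ((j.succ - s.succ : Fin (N+1)).val)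
        = dd N ((((s:ℕ)) : ℤ) - (((j:ℕ)) : ℤ)).natAbs :=
      f_sub_eq N (dd N) (fun m hm1 hm2 => dd_symm N hm1 hm2) s j hne
    rw [matA, if_neg hne, hcR]
    simp only [if_neg (sub_succ_ne_zero N s j hne)]
    rw [Real.norm_eq_abs, abs_neg, abs_of_pos, hd]
    · rw [← hd]
      exact dd_pos N hw1 hw2
  have hsum : ∑ j ∈ Finset.univ.erase s, ‖matA N s j‖
      = ∑ j : Fin N, cR (j.succ - s.succ) - cR 0 := by
    rw [Finset.sum_congr rfl fun j hj => hterm j (Finset.ne_of_mem_erase hj)]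
    rw [Finset.sum_erase_eq_sub (Finset.mem_univ s), sub_self]
  have h2 : ∑ u : Fin (N+1), cR (u - s.succ)
      = cR (0 - s.succ) + ∑ j : Fin N, cR (j.succ - s.succ) := by
    rw [Fin.sum_univ_succ]
  have h3 : ∑ u : Fin (N+1), cR (u - s.succ) = ∑ t : Fin (N+1), cR t := by
    apply Fintype.sum_equiv (Equiv.subRight (s.succ : Fin (N+1)))
    intro u
    simp [Equiv.subRight]
  have h4 : ∑ t : Fin (N+1), cR t = ((N:ℝ)^2+2*N)/3 := by
    rw [hcR]
    refine (fin_sum_split N (0:ℝ) (dd N)).trans ?_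
    rw [dd_sum, zero_add]
  have hneg : (0 - s.succ : Fin (N+1)) ≠ 0 := by
    intro h0
    have := sub_eq_zero.1 h0
    exact Fin.succ_ne_zero s this.symm
  have hb1 : 1 ≤ (0 - s.succ : Fin (N+1)).val := by
    refine Nat.pos_of_ne_zero fun hh => hneg (Fin.ext hh)
  have hb2 : (0 - s.succ : Fin (N+1)).val ≤ N := by
    have := (0 - s.succ : Fin (N+1)).isLt
    omega
  have hcpos : 0 < cR (0 - s.succ) := by
    rw [hcR]
    simp only [if_neg hneg]
    exact dd_pos N hb1 hb2
  have hc0 : cR 0 = 0 := by rw [hcR]; simp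
  rw [hsum, hc0, sub_zero, hdiag, Real.norm_eq_abs, abs_of_pos hDpos]
  have : ∑ j : Fin N, cR (j.succ - s.succ) = ((N:ℝ)^2+2*N)/3 - cR (0 - s.succ) := by
    rw [← h4, ← h3, h2]
    ring
  rw [this]
  linarith

lemma ee_q (N : ℕ) (j : ℕ) : ee (β N j) = (qc N)^j := by
  have h4 : ((N:ℂ)+1) ≠ 0 := Nat.cast_add_one_ne_zero N
  rw [ee, β, qc, ← Complex.exp_nat_mul]
  congr 1
  push_cast
  field_simp

lemma conj_ee (x : ℝ) : (starRingEnd ℂ) (ee x) = ee (-x) := by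
  rw [ee, ee, ← Complex.exp_conj]
  congr 1
  simp [_root_.map_mul, Complex.conj_I, Complex.conj_ofReal]

theorem invA_exp_sum (N : ℕ) (hN : 1 ≤ N) (s : Fin N) :
    (∑ j : Fin N, ((matA N)⁻¹ s j : ℂ) * ee (β N ((j : ℕ) + 1))
        = (ee (β N ((s : ℕ) + 1)) - 1) / (2 * N)) ∧
    (∑ j : Fin N, ((matA N)⁻¹ s j : ℂ) * ee (-(β N ((j : ℕ) + 1)))
        = (ee (-(β N ((s : ℕ) + 1))) - 1) / (2 * N)) := by
  have h2N : (2*(N:ℂ)) ≠ 0 :=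
    mul_ne_zero two_ne_zero (Nat.cast_ne_zero.2 (by omega))
  have hdet : (matA N).det ≠ 0 :=
    det_ne_zero_of_sum_row_lt_diag (dom N hN)
  have hinv : (matA N)⁻¹ * matA N = 1 :=
    Matrix.nonsing_inv_mul _ (isUnit_iff_ne_zero.2 hdet)
  set w : Fin N → ℂ := fun j => ((qc N)^((j:ℕ)+1) - 1)/(2*(N:ℂ)) with hw
  have hrow : ∀ i : Fin N, (qc N)^((i:ℕ)+1) = ∑ k, ((matA N i k : ℝ):ℂ) * w k := by
    intro i
    have hr := rowsum N i
    have hsplit : ∑ k, ((matA N i k : ℝ):ℂ) * w k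
        = (∑ k, ((matA N i k:ℝ):ℂ) * ((qc N)^((k:ℕ)+1) - 1))/(2*(N:ℂ)) := by
      rw [Finset.sum_div]
      exact Finset.sum_congr rfl fun k _ => by rw [hw]; ring
    rw [hsplit, hr]
    field_simp
    rw [mul_div_assoc, div_self (Nat.cast_ne_zero.2 (by omega)), mul_one]
  have part1 : ∑ j : Fin N, ((matA N)⁻¹ s j : ℂ) * ee (β N ((j : ℕ) + 1))
      = (ee (β N ((s : ℕ) + 1)) - 1) / (2 * N) := by
    calc ∑ j : Fin N, ((matA N)⁻¹ s j : ℂ) * ee (β N ((j : ℕ) + 1))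
        = ∑ j : Fin N, ((matA N)⁻¹ s j : ℂ) * ∑ k, ((matA N j k : ℝ):ℂ) * w k := by
          refine Finset.sum_congr rfl fun j _ => ?_
          rw [ee_q, hrow j]
      _ = ∑ k, (∑ j, ((matA N)⁻¹ s j : ℂ) * ((matA N j k : ℝ):ℂ)) * w k := by
          simp_rw [Finset.mul_sum]
          rw [Finset.sum_comm]
          simp_rw [Finset.sum_mul]
          exact Finset.sum_congr rfl fun k _ => Finset.sum_congr rfl fun j _ => by ring
      _ = ∑ k, ((if s = k then 1 else 0 : ℝ) : ℂ) * w k := by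
          refine Finset.sum_congr rfl fun k _ => ?_
          congr 1
          rw [show ∑ j, (((matA N)⁻¹ s j : ℝ) : ℂ) * ((matA N j k : ℝ):ℂ)
              = ((∑ j, (matA N)⁻¹ s j * matA N j k : ℝ) : ℂ) from by push_cast; rfl]
          rw [← Matrix.mul_apply, hinv, Matrix.one_apply]
      _ = w s := by
          simp only [apply_ite (Complex.ofReal), Complex.ofReal_one, Complex.ofReal_zero,
            ite_mul, one_mul, zero_mul, Finset.sum_ite_eq, Finset.mem_univ, if_true]
      _ = (ee (β N ((s : ℕ) + 1)) - 1) / (2 * N) := by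
          rw [hw, ee_q]
  refine ⟨part1, ?_⟩
  calc ∑ j : Fin N, ((matA N)⁻¹ s j : ℂ) * ee (-(β N ((j : ℕ) + 1)))
      = (starRingEnd ℂ) (∑ j : Fin N, ((matA N)⁻¹ s j : ℂ) * ee (β N ((j : ℕ) + 1))) := by
        rw [map_sum]
        refine Finset.sum_congr rfl fun j _ => ?_
        rw [_root_.map_mul, Complex.conj_ofReal, conj_ee]
    _ = (starRingEnd ℂ) ((ee (β N ((s : ℕ) + 1)) - 1) / (2 * N)) := by rw [part1]
    _ = (ee (-(β N ((s : ℕ) + 1))) - 1) / (2 * N) := by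
        simp [map_div₀, map_sub, conj_ee, Complex.conj_natCast, map_ofNat]
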